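/- Let $S \in \mathbb{R}^{n\times n}$ ($n \ge 2$) be the canonical Markov matrix of a pairwise comparison model on the complete graph with $d = 2n$: $S_{ij} = p_{ij}/(2n)$ for $i \ne j$ and $S_{ii} = 1 - \frac{1}{2n}\sum_{k \ne i} p_{ik}$, where all $p_{ij} \in [\frac{\delta}{1+\delta}, \frac{1}{1+\delta}]$ for some $\delta \in (0,1)$. If $\pi$ is a stationary distribution of $S$ (which is entrywise positive), then the principal ratio satisfies $\max_i \pi_i / \min_j \pi_j \le 1/\delta^2$. -/
import Mathlib


open Finset

/-- Principal ratio bound for complete graphs: for the canonical Markov matrix of a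
pairwise comparison model on the complete graph (with `d = 2n`) satisfying the dynamic
range assumption, any (entrywise positive) stationary distribution `π` satisfies
`max_i π_i / min_j π_j ≤ 1/δ²`. -/
theorem principal_ratio_complete_graph (n : ℕ) (hn : 2 ≤ n)
    (δ : ℝ) (hδ0 : 0 < δ) (hδ1 : δ < 1)
    (p : Fin n → Fin n → ℝ)
    (hp : ∀ i j, i ≠ j → δ / (1 + δ) ≤ p i j ∧ p i j ≤ 1 / (1 + δ))
    (S : Matrix (Fin n) (Fin n) ℝ)
    (hSoff : ∀ i j, i ≠ j → S i j = p i j / (2 * n))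
    (hSdiag : ∀ i, S i i = 1 - (∑ k ∈ Finset.univ \ {i}, p i k) / (2 * n))
    (π : Fin n → ℝ) (hπpos : ∀ i, 0 < π i) (hπsum : ∑ i, π i = 1)
    (hπstat : ∀ j, ∑ i, π i * S i j = π j) :
    ∀ i j, π i / π j ≤ 1 / δ ^ 2 := by
  have hδp : (0:ℝ) < 1 + δ := by linarith
  have h2n : (0:ℝ) < 2 * n := by positivity
  have hcard : ∀ a : Fin n, ((univ \ {a} : Finset (Fin n)).card : ℝ) = (n:ℝ) - 1 := by
    intro a
    have hc : (univ \ {a} : Finset (Fin n)).card = n - 1 := by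
      rw [Finset.card_sdiff_of_subset (Finset.subset_univ _), Finset.card_singleton,
        Finset.card_univ, Fintype.card_fin]
    rw [hc, Nat.cast_sub (by omega : 1 ≤ n), Nat.cast_one]
  have hne : ∀ a b : Fin n, b ∈ univ \ {a} → b ≠ a := by
    intro a b hb
    simp [Finset.mem_sdiff] at hb
    exact hb
  -- sum of π over complement
  have hπcompl : ∀ a : Fin n, ∑ k ∈ univ \ {a}, π k = 1 - π a := by
    intro a
    have := Finset.sum_eq_sum_sdiff_singleton_add (Finset.mem_univ a) π
    rw [hπsum] at this
    linarith
  -- key balance equation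
  have key : ∀ a : Fin n, ∑ k ∈ univ \ {a}, π k * p k a
      = π a * ∑ k ∈ univ \ {a}, p a k := by
    intro a
    have h := hπstat a
    rw [Finset.sum_eq_sum_sdiff_singleton_add (Finset.mem_univ a)
      (fun i => π i * S i a)] at h
    rw [hSdiag a] at h
    have hrw : ∑ k ∈ univ \ {a}, π k * S k a
        = (∑ k ∈ univ \ {a}, π k * p k a) / (2 * n) := by
      rw [Finset.sum_div]
      apply Finset.sum_congr rfl
      intro k hk
      rw [hSoff k a (hne a k hk)]
      ring
    rw [hrw] at h
    have hexp : π a * (1 - (∑ k ∈ univ \ {a}, p a k) / (2 * (n:ℝ)))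
        = π a - (π a * ∑ k ∈ univ \ {a}, p a k) / (2 * n) := by ring
    rw [hexp] at h
    have h' : (∑ k ∈ univ \ {a}, π k * p k a) / (2 * (n:ℝ))
        = (π a * ∑ k ∈ univ \ {a}, p a k) / (2 * n) := by linarith
    have h'' := (div_eq_div_iff (ne_of_gt h2n) (ne_of_gt h2n)).mp h'
    exact mul_right_cancel₀ (ne_of_gt h2n) h''
  -- lower bound: δ * (1 - π a) ≤ π a * (n - 1)
  have hlow : ∀ a : Fin n, δ * (1 - π a) ≤ π a * ((n:ℝ) - 1) := by
    intro a
    have h1 : (δ / (1 + δ)) * (1 - π a) ≤ ∑ k ∈ univ \ {a}, π k * p k a := by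
      rw [← hπcompl a, Finset.mul_sum]
      apply Finset.sum_le_sum
      intro k hk
      have hpk := (hp k a (hne a k hk)).1
      have := (hπpos k).le
      nlinarith
    have h2 : π a * ∑ k ∈ univ \ {a}, p a k ≤ π a * (((n:ℝ) - 1) * (1 / (1 + δ))) := by
      apply mul_le_mul_of_nonneg_left _ (hπpos a).le
      calc ∑ k ∈ univ \ {a}, p a k ≤ ∑ k ∈ univ \ {a}, (1 / (1 + δ)) := by
            apply Finset.sum_le_sum
            intro k hk
            exact (hp a k (Ne.symm (hne a k hk))).2
        _ = ((univ \ {a} : Finset (Fin n)).card : ℝ) * (1 / (1 + δ)) := by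
            rw [Finset.sum_const, nsmul_eq_mul]
        _ = ((n:ℝ) - 1) * (1 / (1 + δ)) := by rw [hcard a]
    have h3 := key a
    have h4 : δ * (1 - π a) / (1 + δ) ≤ π a * ((n:ℝ) - 1) / (1 + δ) := by
      have e1 : (δ / (1 + δ)) * (1 - π a) = δ * (1 - π a) / (1 + δ) := by ring
      have e2 : π a * (((n:ℝ) - 1) * (1 / (1 + δ))) = π a * ((n:ℝ) - 1) / (1 + δ) := by ring
      linarith [e1 ▸ h1, e2 ▸ h2]
    have h5 := mul_le_mul_of_nonneg_right h4 hδp.le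
    rw [div_mul_cancel₀ _ (ne_of_gt hδp), div_mul_cancel₀ _ (ne_of_gt hδp)] at h5
    exact h5
  -- upper bound: π a * (n - 1) * δ ≤ 1 - π a
  have hup : ∀ a : Fin n, π a * ((n:ℝ) - 1) * δ ≤ 1 - π a := by
    intro a
    have h1 : ∑ k ∈ univ \ {a}, π k * p k a ≤ (1 / (1 + δ)) * (1 - π a) := by
      rw [← hπcompl a, Finset.mul_sum]
      apply Finset.sum_le_sum
      intro k hk
      have hpk := (hp k a (hne a k hk)).2
      have := (hπpos k).le
      nlinarith
    have h2 : π a * (((n:ℝ) - 1) * (δ / (1 + δ))) ≤ π a * ∑ k ∈ univ \ {a}, p a k := by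
      apply mul_le_mul_of_nonneg_left _ (hπpos a).le
      calc ((n:ℝ) - 1) * (δ / (1 + δ))
          = ((univ \ {a} : Finset (Fin n)).card : ℝ) * (δ / (1 + δ)) := by rw [hcard a]
        _ = ∑ k ∈ univ \ {a}, (δ / (1 + δ)) := by
            rw [Finset.sum_const, nsmul_eq_mul]
        _ ≤ ∑ k ∈ univ \ {a}, p a k := by
            apply Finset.sum_le_sum
            intro k hk
            exact (hp a k (Ne.symm (hne a k hk))).1
    have h3 := key a
    have h4 : π a * ((n:ℝ) - 1) * δ / (1 + δ) ≤ (1 - π a) / (1 + δ) := by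
      have e1 : π a * (((n:ℝ) - 1) * (δ / (1 + δ))) = π a * ((n:ℝ) - 1) * δ / (1 + δ) := by
        ring
      have e2 : (1 / (1 + δ)) * (1 - π a) = (1 - π a) / (1 + δ) := by ring
      linarith [e1 ▸ h2, e2 ▸ h1]
    have h5 := mul_le_mul_of_nonneg_right h4 hδp.le
    rw [div_mul_cancel₀ _ (ne_of_gt hδp), div_mul_cancel₀ _ (ne_of_gt hδp)] at h5
    exact h5
  intro i j
  have hπi := hπpos i
  have hπj := hπpos j
  have hδ2 : (0:ℝ) < δ ^ 2 := by positivity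
  rw [div_le_div_iff₀ hπj hδ2]
  rcases le_or_gt (π i) (π j) with hle | hlt
  · have hδ2le : δ ^ 2 ≤ 1 := by nlinarith
    nlinarith [mul_le_mul_of_nonneg_left hδ2le hπi.le]
  · -- π j < π i, so 1 - π i ≤ 1 - π j
    have hA := hup i
    have hB := hlow j
    have hn1 : (1:ℝ) ≤ (n:ℝ) - 1 := by
      have : (2:ℝ) ≤ n := by exact_mod_cast hn
      linarith
    -- π i * (n-1) * δ ≤ 1 - π i ≤ 1 - π j ≤ π j * (n-1) / δ
    have h5 : δ * (1 - π i) ≤ δ * (1 - π j) := by nlinarith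
    -- δ * (π i * (n-1) * δ) ≤ δ * (1 - π i) ≤ δ*(1-π j) ≤ π j * (n-1)
    have h6 : π i * ((n:ℝ) - 1) * δ * δ ≤ π j * ((n:ℝ) - 1) := by nlinarith
    have h7 : π i * δ * δ ≤ π j := by
      have hn1' : (0:ℝ) < (n:ℝ) - 1 := by linarith
      nlinarith
    nlinarith
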